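/- If X is a path-connected semi-locally small loop space, then the small loop groups at any two points are isomorphic: π₁ˢ(X,x) ≅ π₁ˢ(X,y) for all x, y ∈ X, via conjugation by a path class from x to y. -/

import Mathlib

open CategoryTheory Topology

attribute [local instance] Path.Homotopic.setoid

noncomputable section

variable {X Y E : Type*} [TopologicalSpace X] [TopologicalSpace Y] [TopologicalSpace E]

/-- Build an element of the fundamental group from a homotopy class of loops. -/
def fromLoop {x : X} (p : Path.Homotopic.Quotient x x) : FundamentalGroup X x :=
  FundamentalGroup.fromPath p

/-- The homotopy class of loops underlying an element of the fundamental group. -/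
def toLoop {x : X} (γ : FundamentalGroup X x) : Path.Homotopic.Quotient x x :=
  FundamentalGroup.toPath γ

/-- A fundamental group element is *small* if it has a loop representative inside every
neighborhood of the basepoint. -/
def IsSmall {x : X} (γ : FundamentalGroup X x) : Prop :=
  ∀ U ∈ nhds x, ∃ δ : Path x x, (∀ t, δ t ∈ U) ∧ fromLoop ⟦δ⟧ = γ

/-- The set of small loop classes, i.e. the carrier of the small loop group `π₁ˢ(X,x)`. -/
def smallSet (X : Type*) [TopologicalSpace X] (x : X) : Set (FundamentalGroup X x) :=
  {γ | IsSmall γ}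

/-- Conjugate of a loop class at `y` by a path `α` from `x` to `y`: `α * β * α⁻¹`. -/
def conjPath {x y : X} (α : Path x y) (β : FundamentalGroup X y) : FundamentalGroup X x :=
  fromLoop (Path.Homotopic.Quotient.trans
    (Path.Homotopic.Quotient.trans (⟦α⟧ : Path.Homotopic.Quotient x y) (toLoop β))
    (⟦α.symm⟧ : Path.Homotopic.Quotient y x))

/-- The SG subgroup `π₁ˢᵍ(X,x)`: generated by conjugates of small loop classes. -/
def sgSubgroup (X : Type*) [TopologicalSpace X] (x : X) : Subgroup (FundamentalGroup X x) :=
  Subgroup.closure {g | ∃ (y : X) (α : Path x y) (β : FundamentalGroup X y), IsSmall β ∧ g = conjPath α β}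

/-- The map induced on fundamental groups by a continuous map. -/
def piMap (f : C(X, Y)) (x : X) (γ : FundamentalGroup X x) : FundamentalGroup Y (f x) :=
  fromLoop (Path.Homotopic.Quotient.map (toLoop γ) f)

/-- A small loop space: a path-connected, non-simply connected space all of whose loops
are small. -/
def IsSmallLoopSpace (X : Type*) [TopologicalSpace X] : Prop :=
  PathConnectedSpace X ∧ ¬ SimplyConnectedSpace X ∧
    ∀ (x : X) (γ : FundamentalGroup X x), IsSmall γ

/-- A space is homotopically Hausdorff if every nontrivial loop class can be kept away from
some neighborhood of its basepoint. -/
def HomotopicallyHausdorff (X : Type*) [TopologicalSpace X] : Prop :=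
  ∀ (x : X) (γ : FundamentalGroup X x), γ ≠ 1 →
    ∃ U ∈ nhds x, ∀ δ : Path x x, (∀ t, δ t ∈ U) → fromLoop ⟦δ⟧ ≠ γ

/-- The image of `π₁(U,y) → π₁(X,y)`: classes of loops having a representative inside `U`. -/
def loopsIn (U : Set X) (y : X) : Set (FundamentalGroup X y) :=
  {γ | ∃ δ : Path y y, (∀ t, δ t ∈ U) ∧ fromLoop ⟦δ⟧ = γ}

/-- A semi-locally small loop space. -/
def SemiLocallySmallLoop (X : Type*) [TopologicalSpace X] : Prop :=
  ∀ x : X, ∃ U : Set X, IsOpen U ∧ x ∈ U ∧ ∀ y ∈ U, loopsIn U y = smallSet X y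


section Aux
variable {x y z : X}

lemma toLoop_fromLoop (p : Path.Homotopic.Quotient x x) : toLoop (fromLoop p) = p := rfl

lemma fromLoop_toLoop (γ : FundamentalGroup X x) : fromLoop (toLoop γ) = γ :=
  rfl

lemma fromLoop_injective : Function.Injective (fromLoop (x := x)) :=
  fun p q h => h

-- view a homotopy class as a morphism in the fundamental groupoid
abbrev homOf {a b : X} (p : Path.Homotopic.Quotient a b) :
    FundamentalGroupoid.mk a ⟶ FundamentalGroupoid.mk b := p

lemma comp_eq_comp {a b c : X} (p : Path.Homotopic.Quotient a b) (q : Path.Homotopic.Quotient b c) :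
    Path.Homotopic.Quotient.trans p q = homOf p ≫ homOf q := rfl

lemma symm_eq_inv {a b : X} (σ : Path a b) :
    (⟦σ.symm⟧ : Path.Homotopic.Quotient b a) = Groupoid.inv (homOf ⟦σ⟧) := rfl

lemma conjPath_eq {a b : X} (σ : Path a b) (β : FundamentalGroup X b) :
    conjPath σ β = fromLoop (homOf ⟦σ⟧ ≫ toLoop β ≫ Groupoid.inv (homOf ⟦σ⟧)) := by
  exact congrArg fromLoop (Category.assoc (homOf ⟦σ⟧) (toLoop β) (Groupoid.inv (homOf ⟦σ⟧)))

lemma conjPath_symm_eq {a b : X} (σ : Path a b) (γ : FundamentalGroup X a) :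
    conjPath σ.symm γ = fromLoop (Groupoid.inv (homOf ⟦σ⟧) ≫ toLoop γ ≫ homOf ⟦σ⟧) := by
  rw [conjPath_eq σ.symm, symm_eq_inv σ]
  simp [Groupoid.inv_eq_inv]

end Aux

section Aux2
variable {x y z : X}

lemma conjPath_congr {a b : X} {σ₁ σ₂ : Path a b}
    (h : (⟦σ₁⟧ : Path.Homotopic.Quotient a b) = ⟦σ₂⟧) (γ : FundamentalGroup X a) :
    conjPath σ₁.symm γ = conjPath σ₂.symm γ := by
  rw [conjPath_symm_eq, conjPath_symm_eq]
  have : homOf ⟦σ₁⟧ = homOf ⟦σ₂⟧ := congrArg _ h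
  rw [this]

lemma conjPath_comp {a b c : X} (p : Path a b) (q : Path b c) (r : Path a c)
    (h : (⟦r⟧ : Path.Homotopic.Quotient a c) = Path.Homotopic.Quotient.trans ⟦p⟧ ⟦q⟧)
    (γ : FundamentalGroup X a) :
    conjPath r.symm γ = conjPath q.symm (conjPath p.symm γ) := by
  rw [conjPath_symm_eq, conjPath_symm_eq, conjPath_symm_eq, toLoop_fromLoop]
  have : homOf ⟦r⟧ = homOf ⟦p⟧ ≫ homOf ⟦q⟧ := h
  rw [this]
  congr 1
  simp [Groupoid.inv_eq_inv]

lemma conjPath_conjPath_symm {a b : X} (σ : Path a b) (γ : FundamentalGroup X a) :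
    conjPath σ (conjPath σ.symm γ) = γ := by
  rw [conjPath_symm_eq, conjPath_eq, toLoop_fromLoop]
  have : homOf ⟦σ⟧ ≫ (Groupoid.inv (homOf ⟦σ⟧) ≫ toLoop γ ≫ homOf ⟦σ⟧) ≫
      Groupoid.inv (homOf ⟦σ⟧) = toLoop γ := by
    simp [Groupoid.inv_eq_inv]
  rw [this, fromLoop_toLoop]

lemma conjPath_symm_conjPath {a b : X} (σ : Path a b) (β : FundamentalGroup X b) :
    conjPath σ.symm (conjPath σ β) = β := by
  rw [conjPath_symm_eq σ (conjPath σ β), conjPath_eq σ β, toLoop_fromLoop]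
  have : Groupoid.inv (homOf ⟦σ⟧) ≫ (homOf ⟦σ⟧ ≫ toLoop β ≫ Groupoid.inv (homOf ⟦σ⟧)) ≫
      homOf ⟦σ⟧ = toLoop β := by
    simp [Groupoid.inv_eq_inv]
  rw [this, fromLoop_toLoop]

end Aux2

section Seg
variable {a b : X}

open unitInterval in
/-- The linear segment of a path between parameters `t₀` and `t₁`. -/
def seg (γ : Path a b) (t₀ t₁ : unitInterval) {c d : X} (h₀ : γ t₀ = c) (h₁ : γ t₁ = d) :
    Path c d where
  toFun s := γ.extend ((1 - (s : ℝ)) * (t₀ : ℝ) + (s : ℝ) * (t₁ : ℝ))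
  continuous_toFun := γ.continuous_extend.comp (by fun_prop)
  source' := by
    simp only [Set.Icc.coe_zero, sub_zero, one_mul, zero_mul, add_zero]
    rw [Path.extend_extends' γ t₀]; exact h₀
  target' := by
    simp only [Set.Icc.coe_one, sub_self, zero_mul, one_mul, zero_add]
    rw [Path.extend_extends' γ t₁]; exact h₁

lemma seg_coe (γ : Path a b) (t₀ t₁ : unitInterval) {c d : X} (h₀ : γ t₀ = c) (h₁ : γ t₁ = d)
    (s : unitInterval) :
    seg γ t₀ t₁ h₀ h₁ s = γ.extend ((1 - (s : ℝ)) * (t₀ : ℝ) + (s : ℝ) * (t₁ : ℝ)) := rfl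

lemma seg_prop (γ : Path a b) (t₀ t₁ : unitInterval) {c d : X} (h₀ : γ t₀ = c) (h₁ : γ t₁ = d)
    (s : unitInterval) :
    ∃ u : unitInterval, seg γ t₀ t₁ h₀ h₁ s = γ u ∧ dist u t₀ ≤ dist t₁ t₀ ∧
      dist u t₁ ≤ dist t₀ t₁ := by
  have hs0 : (0:ℝ) ≤ s := s.2.1
  have hs1 : (s:ℝ) ≤ 1 := s.2.2
  have h10 : (0:ℝ) ≤ t₀ := t₀.2.1
  have h11 : (t₀:ℝ) ≤ 1 := t₀.2.2
  have h20 : (0:ℝ) ≤ t₁ := t₁.2.1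
  have h21 : (t₁:ℝ) ≤ 1 := t₁.2.2
  refine ⟨⟨(1 - (s : ℝ)) * (t₀ : ℝ) + (s : ℝ) * (t₁ : ℝ), ⟨by nlinarith, by nlinarith⟩⟩, ?_, ?_, ?_⟩
  · rw [seg_coe]
    exact γ.extend_extends' ⟨_, ⟨by nlinarith, by nlinarith⟩⟩
  · rw [Subtype.dist_eq, Subtype.dist_eq, Real.dist_eq, Real.dist_eq]
    have e : (1 - (s : ℝ)) * (t₀ : ℝ) + (s : ℝ) * (t₁ : ℝ) - t₀ = s * ((t₁:ℝ) - t₀) := by ring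
    rw [e, abs_mul, abs_of_nonneg hs0]
    nlinarith [abs_nonneg ((t₁:ℝ) - t₀)]
  · rw [Subtype.dist_eq, Subtype.dist_eq, Real.dist_eq, Real.dist_eq]
    have e : (1 - (s : ℝ)) * (t₀ : ℝ) + (s : ℝ) * (t₁ : ℝ) - t₁ = (1 - s) * ((t₀:ℝ) - t₁) := by
      ring
    rw [e, abs_mul, abs_of_nonneg (by linarith)]
    nlinarith [abs_nonneg ((t₀:ℝ) - t₁)]

/-- Any two paths that are reparametrizations (via `extend`) of the same path, with matching
endpoint parameters, are homotopic (by the straight-line homotopy in the parameter). -/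
lemma homotopic_of_extend {c d : X} (γ : Path a b) (p q : Path c d) (h₀ h₁ : unitInterval → ℝ)
    (hc₀ : Continuous h₀) (hc₁ : Continuous h₁)
    (e₀ : h₀ 0 = h₁ 0) (e₁ : h₀ 1 = h₁ 1)
    (hp : ∀ s, p s = γ.extend (h₀ s)) (hq : ∀ s, q s = γ.extend (h₁ s)) :
    (⟦p⟧ : Path.Homotopic.Quotient c d) = ⟦q⟧ := by
  refine Quotient.sound ⟨⟨⟨⟨fun us => γ.extend ((1 - (us.1 : ℝ)) * h₀ us.2 + (us.1 : ℝ) * h₁ us.2),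
      ?_⟩, ?_, ?_⟩, ?_⟩⟩
  · exact γ.continuous_extend.comp (by fun_prop)
  · intro s
    simp only [Set.Icc.coe_zero, sub_zero, one_mul, zero_mul, add_zero]
    exact (hp s).symm
  · intro s
    simp only [Set.Icc.coe_one, sub_self, zero_mul, one_mul, zero_add]
    exact (hq s).symm
  · intro t s hs
    simp only [Set.mem_insert_iff, Set.mem_singleton_iff] at hs
    rcases hs with rfl | rfl
    · simp only [ContinuousMap.coe_mk]
      rw [← e₀]
      have : (1 - (t : ℝ)) * h₀ 0 + (t : ℝ) * h₀ 0 = h₀ 0 := by ring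
      rw [this, ← hp 0]
      rfl
    · simp only [ContinuousMap.coe_mk]
      rw [← e₁]
      have : (1 - (t : ℝ)) * h₀ 1 + (t : ℝ) * h₀ 1 = h₀ 1 := by ring
      rw [this, ← hp 1]
      rfl

end Seg

section Seg2
variable {a b : X}

lemma seg_trans (γ : Path a b) (t₀ t₁ t₂ : unitInterval) {c d e : X}
    (h₀ : γ t₀ = c) (h₁ : γ t₁ = d) (h₂ : γ t₂ = e) :
    (⟦(seg γ t₀ t₁ h₀ h₁).trans (seg γ t₁ t₂ h₁ h₂)⟧ : Path.Homotopic.Quotient c e) =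
      ⟦seg γ t₀ t₂ h₀ h₂⟧ := by
  refine homotopic_of_extend γ _ _
    (fun s => if (s : ℝ) ≤ 1/2 then (1 - 2*(s:ℝ)) * (t₀:ℝ) + 2*(s:ℝ) * (t₁:ℝ)
      else (2 - 2*(s:ℝ)) * (t₁:ℝ) + (2*(s:ℝ) - 1) * (t₂:ℝ))
    (fun s => (1 - (s : ℝ)) * (t₀ : ℝ) + (s : ℝ) * (t₂ : ℝ)) ?_ (by fun_prop) ?_ ?_ ?_ ?_
  · refine Continuous.if_le ?_ ?_ (by fun_prop) continuous_const ?_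
    · fun_prop
    · fun_prop
    · intro x hx
      rw [hx]; ring
  · norm_num
  · norm_num
  · intro s
    rw [Path.trans_apply]
    split_ifs with h
    · rw [seg_coe]
    · rw [seg_coe]
      simp only [if_neg h]
      congr 1
      push_cast
      ring
  · intro s
    rw [seg_coe]

end Seg2

section Seg3
variable {a b : X}

lemma seg_zero_one (γ : Path a b) (h₀ : γ 0 = a) (h₁ : γ 1 = b) :
    (⟦seg γ 0 1 h₀ h₁⟧ : Path.Homotopic.Quotient a b) = ⟦γ⟧ := by
  refine homotopic_of_extend γ _ _
    (fun s => (1 - (s : ℝ)) * ((0:unitInterval) : ℝ) + (s : ℝ) * ((1:unitInterval) : ℝ))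
    (fun s => (s : ℝ)) (by fun_prop) (by fun_prop) (by norm_num) (by norm_num) ?_ ?_
  · intro s; rw [seg_coe]
  · intro s
    exact (γ.extend_extends' s).symm

lemma seg_self_eq_const (γ : Path a b) (t : unitInterval) {c d : X} (h₀ : γ t = c)
    (h₁ : γ t = d) (s : unitInterval) : seg γ t t h₀ h₁ s = c := by
  rw [seg_coe]
  have : (1 - (s : ℝ)) * (t : ℝ) + (s : ℝ) * (t : ℝ) = (t : ℝ) := by ring
  rw [this, γ.extend_extends' t]
  exact h₀

/-- Conjugation by a constant path does not change smallness. -/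
lemma mapsTo_conjPath_const {a b : X} (σ : Path a b) (hσ : ∀ s, σ s = a) :
    Set.MapsTo (conjPath σ.symm) (smallSet X a) (smallSet X b) := by
  have h : a = b := by rw [← σ.target, hσ 1]
  subst h
  have hrefl : σ = Path.refl a := by
    ext s
    rw [hσ s]
    rfl
  subst hrefl
  intro γ hγ
  have hid : conjPath (Path.refl a).symm γ = γ := by
    rw [conjPath_symm_eq]
    have h1 : homOf ⟦Path.refl a⟧ = 𝟙 (FundamentalGroupoid.mk a) := rfl
    rw [h1]
    simp only [Category.comp_id, Groupoid.inv_eq_inv, IsIso.inv_id, Category.id_comp]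
    exact fromLoop_toLoop γ
  rwa [hid]

/-- The key transfer lemma: conjugation along a path inside an SLSL neighborhood maps small
classes to small classes. -/
lemma mapsTo_conjPath_of_subset {U : Set X} (hU : ∀ z ∈ U, loopsIn U z = smallSet X z)
    {a b : X} (σ : Path a b) (hσ : ∀ s, σ s ∈ U) :
    Set.MapsTo (conjPath σ.symm) (smallSet X a) (smallSet X b) := by
  intro γ hγ
  have ha : a ∈ U := by rw [← σ.source]; exact hσ 0
  have hb : b ∈ U := by rw [← σ.target]; exact hσ 1
  rw [← hU a ha] at hγ
  obtain ⟨δ, hδU, hδ⟩ := hγ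
  rw [← hU b hb]
  have hloop : toLoop γ = ⟦δ⟧ := by rw [← hδ]; rfl
  refine ⟨(σ.symm.trans δ).trans σ, ?_, ?_⟩
  · intro t
    have hrange : Set.range ((σ.symm.trans δ).trans σ) ⊆ U := by
      rw [Path.trans_range, Path.trans_range, Path.symm_range]
      rintro u (( ⟨s, rfl⟩ | ⟨s, rfl⟩ ) | ⟨s, rfl⟩)
      · exact hσ s
      · exact hδU s
      · exact hσ s
    exact hrange ⟨t, rfl⟩
  · rw [conjPath_symm_eq]
    congr 1
    rw [hloop, ← symm_eq_inv σ]
    show _ = Path.Homotopic.Quotient.trans ⟦σ.symm⟧ (Path.Homotopic.Quotient.trans ⟦δ⟧ ⟦σ⟧)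
    exact Quotient.sound ⟨Path.Homotopy.transAssoc _ _ _⟩
end Seg3

section Main

lemma mapsTo_conjPath_symm_of_path (hX : SemiLocallySmallLoop X) {x y : X} (α : Path x y) :
    Set.MapsTo (conjPath α.symm) (smallSet X x) (smallSet X y) := by
  set S : Set unitInterval := {t | ∀ (c : X) (h : α t = c),
    Set.MapsTo (conjPath (seg α 0 t α.source h).symm) (smallSet X x) (smallSet X c)} with hSdef
  -- one step: transfer membership in S along a segment inside an SLSL neighborhood
  have step : ∀ (t t' : unitInterval) (U : Set X),
      (∀ z ∈ U, loopsIn U z = smallSet X z) →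
      (∀ s : unitInterval, seg α t t' rfl rfl s ∈ U) → t ∈ S → t' ∈ S := by
    intro t t' U hU hmem ht
    intro c h
    have hmem' : ∀ s : unitInterval, seg α t t' rfl h s ∈ U := hmem
    have hdec := seg_trans α 0 t t' α.source rfl h
    have hcomp : (⟦seg α 0 t' α.source h⟧ : Path.Homotopic.Quotient x c) =
        Path.Homotopic.Quotient.trans ⟦seg α 0 t α.source rfl⟧ ⟦seg α t t' rfl h⟧ := by
      rw [← hdec]; rfl
    intro γ hγ
    rw [conjPath_comp (seg α 0 t α.source rfl) (seg α t t' rfl h) _ hcomp γ]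
    exact mapsTo_conjPath_of_subset hU (seg α t t' rfl h) hmem' (ht (α t) rfl hγ)
  have hzero : (0 : unitInterval) ∈ S := by
    intro c h
    exact mapsTo_conjPath_const (seg α 0 0 α.source h)
      (fun s => seg_self_eq_const α 0 α.source h s)
  -- openness of S and of its complement
  have nbhd : ∀ t : unitInterval, ∃ ε > 0, ∃ U : Set X,
      (∀ z ∈ U, loopsIn U z = smallSet X z) ∧
      ∀ u : unitInterval, dist u t < ε → α u ∈ U := by
    intro t
    obtain ⟨U, Uopen, hUmem, hU⟩ := hX (α t)
    have hpre : IsOpen (α ⁻¹' U) := Uopen.preimage α.continuous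
    obtain ⟨ε, hε, hball⟩ := Metric.isOpen_iff.mp hpre t hUmem
    exact ⟨ε, hε, U, hU, fun u hu => hball hu⟩
  have hopen : IsOpen S := by
    rw [Metric.isOpen_iff]
    intro t ht
    obtain ⟨ε, hε, U, hU, hball⟩ := nbhd t
    refine ⟨ε, hε, fun t' ht' => ?_⟩
    refine step t t' U hU (fun s => ?_) ht
    obtain ⟨u, hu, hd, _⟩ := seg_prop α t t' rfl rfl s
    rw [hu]
    exact hball u (lt_of_le_of_lt hd (Metric.mem_ball.mp ht'))
  have hclosed : IsClosed S := by
    rw [← isOpen_compl_iff, Metric.isOpen_iff]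
    intro t ht
    obtain ⟨ε, hε, U, hU, hball⟩ := nbhd t
    refine ⟨ε, hε, fun t' ht' hmem => ht ?_⟩
    refine step t' t U hU (fun s => ?_) hmem
    obtain ⟨u, hu, _, hd⟩ := seg_prop α t' t rfl rfl s
    rw [hu]
    exact hball u (lt_of_le_of_lt hd (Metric.mem_ball.mp ht'))
  have huniv : S = Set.univ := (IsClopen.eq_univ ⟨hclosed, hopen⟩ ⟨0, hzero⟩)
  have hone : (1 : unitInterval) ∈ S := huniv ▸ Set.mem_univ _
  have hfin := hone y α.target
  intro γ hγ
  have := conjPath_congr (σ₁ := α) (σ₂ := seg α 0 1 α.source α.target)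
    (seg_zero_one α α.source α.target).symm γ
  rw [this]
  exact hfin hγ

end Main

/-- in a path-connected semi-locally small loop space the small loop groups at
any two points are isomorphic via conjugation by a path class: `[β] ↦ [α⁻¹ * β * α]` is a
bijection from `π₁ˢ(X,x)` onto `π₁ˢ(X,y)`. -/
theorem small_groups_isomorphic_of_semiLocallySmallLoop (X : Type*) [TopologicalSpace X]
    [PathConnectedSpace X] (hX : SemiLocallySmallLoop X) (x y : X) (α : Path x y) :
    Set.BijOn (conjPath α.symm) (smallSet X x) (smallSet X y) := by
  have hf : Set.MapsTo (conjPath α.symm) (smallSet X x) (smallSet X y) :=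
    mapsTo_conjPath_symm_of_path hX α
  have hg : Set.MapsTo (conjPath α) (smallSet X y) (smallSet X x) := by
    have := mapsTo_conjPath_symm_of_path hX α.symm
    rwa [Path.symm_symm] at this
  refine Set.InvOn.bijOn ⟨?_, ?_⟩ hf hg
  · intro γ _
    exact conjPath_conjPath_symm α γ
  · intro β _
    exact conjPath_symm_conjPath α β


end
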